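/- Let Φ be a quantum channel from d_A×d_A to d_B×d_B complex matrices with Choi state J(Φ), and let k ≥ 1. Define SDP₁(Φ,k) as the supremum of (d_A/k) Σ_{i=1}^k tr( J(Φ) W^{(i,i)} ) over all families { W^{(i,j)} : i, j ∈ [k] } of positive semidefinite matrices on ℂ^{d_A} ⊗ ℂ^{d_B} satisfying: (1) Σ_{i,j} tr(W^{(i,j)}) = k·d_B; (2) for every i ∈ [k], Σ_{j=1}^k W^{(i,j)} = ( Σ_{j=1}^k tr_B(W^{(i,j)}) ) ⊗ (I_{d_B}/d_B), where tr_B is the partial trace over the second factor; (3) for all i, j ∈ [k], tr_A(W^{(i,j)}) = (1/k) Σ_{l=1}^k tr_A(W^{(l,j)}), where tr_A is the partial trace over the first factor. Then P_succ(Φ,k) ≤ SDP₁(Φ,k). -/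

import Mathlib

open Matrix Kronecker BigOperators
open scoped ComplexOrder

noncomputable section

/-- The trace norm (sum of singular values) of a complex matrix: `tr √(AᴴA)`. -/
def traceNorm {m n : Type*} [Fintype m] [Fintype n] [DecidableEq n] (A : Matrix m n ℂ) : ℝ :=
  (((Matrix.posSemidef_conjTranspose_mul_self A).1.eigenvectorUnitary : Matrix n n ℂ) *
    Matrix.diagonal (((↑) : ℝ → ℂ) ∘ Real.sqrt ∘
      (Matrix.posSemidef_conjTranspose_mul_self A).1.eigenvalues) *
    (star (Matrix.posSemidef_conjTranspose_mul_self A).1.eigenvectorUnitary : Matrix n n ℂ)).trace.re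

/-- A density matrix: positive semidefinite with trace one. -/
def IsDensity {n : Type*} [Fintype n] [DecidableEq n] (ρ : Matrix n n ℂ) : Prop :=
  ρ.PosSemidef ∧ ρ.trace = 1

/-- Trace norm contraction coefficient of a map on matrices. -/
def etaTr {dA dB : ℕ} (Φ : Matrix (Fin dA) (Fin dA) ℂ → Matrix (Fin dB) (Fin dB) ℂ) : ℝ :=
  sSup {r : ℝ | ∃ ρ σ : Matrix (Fin dA) (Fin dA) ℂ, IsDensity ρ ∧ IsDensity σ ∧ ρ ≠ σ ∧
    r = traceNorm (Φ ρ - Φ σ) / traceNorm (ρ - σ)}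

/-- Optimal success probability for transmitting one of `k` messages through `Φ`. -/
def Psucc {dA dB : ℕ} (Φ : Matrix (Fin dA) (Fin dA) ℂ → Matrix (Fin dB) (Fin dB) ℂ)
    (k : ℕ) : ℝ :=
  sSup {r : ℝ | ∃ (M : Fin k → Matrix (Fin dB) (Fin dB) ℂ)
      (ρ : Fin k → Matrix (Fin dA) (Fin dA) ℂ),
    (∀ i, (M i).PosSemidef) ∧ (∑ i, M i = 1) ∧ (∀ i, IsDensity (ρ i)) ∧
    r = (1 / (k : ℝ)) * ∑ i, ((M i * Φ (ρ i)).trace).re}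

/-- The Euclidean (ℓ₂) norm of a complex vector. -/
def l2norm {n : Type*} [Fintype n] (v : n → ℂ) : ℝ :=
  Real.sqrt (∑ i, ‖v i‖ ^ 2)

/-- Choi state of a map on matrices: `(1/dA) ∑ᵢⱼ Eᵢⱼ ⊗ Φ(Eᵢⱼ)`. -/
def choi {dA dB : ℕ} (Φ : Matrix (Fin dA) (Fin dA) ℂ → Matrix (Fin dB) (Fin dB) ℂ) :
    Matrix (Fin dA × Fin dB) (Fin dA × Fin dB) ℂ :=
  (dA : ℂ)⁻¹ • ∑ i : Fin dA, ∑ j : Fin dA,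
    (Matrix.single i j (1 : ℂ)) ⊗ₖ (Φ (Matrix.single i j (1 : ℂ)))

/-- Partial trace over the first tensor factor. -/
def ptraceFst {m n : Type*} [Fintype m] (W : Matrix (m × n) (m × n) ℂ) : Matrix n n ℂ :=
  Matrix.of fun b b' => ∑ a, W (a, b) (a, b')

/-- Partial trace over the second tensor factor. -/
def ptraceSnd {m n : Type*} [Fintype n] (W : Matrix (m × n) (m × n) ℂ) : Matrix m m ℂ :=
  Matrix.of fun a a' => ∑ b, W (a, b) (a', b)


/-! ### Auxiliary lemmas -/

section Aux

lemma kron_conjT {l m p q : Type*} (A : Matrix l m ℂ) (B : Matrix p q ℂ) :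
    (A ⊗ₖ B)ᴴ = Aᴴ ⊗ₖ Bᴴ := by
  ext ⟨a,b⟩ ⟨c,d⟩
  simp [conjTranspose_apply, kroneckerMap_apply, star_mul', mul_comm]

lemma psd_kron {m n : Type*} [Fintype m] [Fintype n] [DecidableEq m] [DecidableEq n]
    {A : Matrix m m ℂ} {B : Matrix n n ℂ} (hA : A.PosSemidef) (hB : B.PosSemidef) :
    (A ⊗ₖ B).PosSemidef := by
  exact hA.kronecker hB

lemma psd_smul' {n : Type*} [Fintype n] {M : Matrix n n ℂ} (hM : M.PosSemidef)
    {c : ℂ} (hc : 0 ≤ c) : (c • M).PosSemidef := by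
  refine Matrix.PosSemidef.of_dotProduct_mulVec_nonneg ?_ fun x => ?_
  · unfold Matrix.IsHermitian
    rw [conjTranspose_smul, hM.1.eq, (IsSelfAdjoint.of_nonneg hc : star c = c)]
  · rw [smul_mulVec, dotProduct_smul, smul_eq_mul]
    exact mul_nonneg hc (hM.dotProduct_mulVec_nonneg x)

lemma trace_stdBasis_mul {d : ℕ} (i j : Fin d) (A : Matrix (Fin d) (Fin d) ℂ) :
    (Matrix.single i j 1 * A).trace = A j i := by
  rw [Matrix.trace, Finset.sum_eq_single i]
  · simp [Matrix.diag]
  · intro b _ hb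
    exact Matrix.single_mul_apply_of_ne (c := 1) (i := i) (j := j) (a := b) (b := b) (h := hb) (M := A)
  · simp

lemma ptraceSnd_kron {m n : Type*} [Fintype m] [Fintype n]
    (A : Matrix m m ℂ) (B : Matrix n n ℂ) : ptraceSnd (A ⊗ₖ B) = B.trace • A := by
  ext a a'
  simp [ptraceSnd, Matrix.trace, Matrix.diag, Finset.mul_sum, mul_comm, Finset.sum_mul]

lemma ptraceFst_kron {m n : Type*} [Fintype m] [Fintype n]
    (A : Matrix m m ℂ) (B : Matrix n n ℂ) : ptraceFst (A ⊗ₖ B) = A.trace • B := by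
  ext b b'
  simp [ptraceFst, Matrix.trace, Matrix.diag, Finset.sum_mul]

lemma kron_sum_right {m n : Type*} [Fintype m] [Fintype n] {k : ℕ}
    (A : Matrix m m ℂ) (f : Fin k → Matrix n n ℂ) :
    ∑ j, A ⊗ₖ f j = A ⊗ₖ (∑ j, f j) := by
  ext ⟨a,b⟩ ⟨a',b'⟩
  simp [kroneckerMap_apply, Finset.mul_sum, Matrix.sum_apply]

lemma trace_kraus {dA dB : ℕ} (Kk : Matrix (Fin dB) (Fin dA) ℂ)
    (ρ : Matrix (Fin dA) (Fin dA) ℂ) (M : Matrix (Fin dB) (Fin dB) ℂ) :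
    ∑ i, ∑ j, ρ i j * (Kk * Matrix.single i j (1:ℂ) * Kkᴴ * M).trace
      = (Kk * ρ * Kkᴴ * M).trace := by
  conv_rhs => rw [matrix_eq_sum_single ρ]
  simp only [Matrix.mul_sum, Matrix.sum_mul, trace_sum]
  refine Finset.sum_congr rfl fun i _ => Finset.sum_congr rfl fun j _ => ?_
  rw [show Matrix.single i j (ρ i j) = ρ i j • Matrix.single i j (1:ℂ) by
    rw [smul_single, smul_eq_mul, mul_one]]
  rw [Matrix.mul_smul, Matrix.smul_mul, Matrix.smul_mul, trace_smul, smul_eq_mul]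

lemma key_trace {dA dB : ℕ} {ι : Type} [Fintype ι]
    (K : ι → Matrix (Fin dB) (Fin dA) ℂ)
    (Φ : Matrix (Fin dA) (Fin dA) ℂ → Matrix (Fin dB) (Fin dB) ℂ)
    (hΦ : ∀ x, Φ x = ∑ i, K i * x * (K i)ᴴ)
    (ρ : Matrix (Fin dA) (Fin dA) ℂ) (M : Matrix (Fin dB) (Fin dB) ℂ) :
    (choi Φ * (ρᵀ ⊗ₖ M)).trace = (dA : ℂ)⁻¹ * (M * Φ ρ).trace := by
  rw [choi, Matrix.smul_mul, trace_smul, smul_eq_mul]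
  congr 1
  simp only [Matrix.sum_mul, trace_sum, ← mul_kronecker_mul, trace_kronecker]
  have h1 : ∀ i j : Fin dA, (Matrix.single i j (1:ℂ) * ρᵀ).trace = ρ i j := by
    intro i j; rw [trace_stdBasis_mul]; rfl
  calc ∑ i, ∑ j, (Matrix.single i j (1:ℂ) * ρᵀ).trace
        * (Φ (Matrix.single i j (1:ℂ)) * M).trace
      = ∑ i, ∑ j, ∑ κ, ρ i j * (K κ * Matrix.single i j (1:ℂ) * (K κ)ᴴ * M).trace := by
        refine Finset.sum_congr rfl fun i _ => Finset.sum_congr rfl fun j _ => ?_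
        rw [h1, hΦ, Matrix.sum_mul, trace_sum, Finset.mul_sum]
    _ = ∑ i : Fin dA, ∑ κ, ∑ j, ρ i j
          * (K κ * Matrix.single i j (1:ℂ) * (K κ)ᴴ * M).trace :=
        Finset.sum_congr rfl fun i _ => Finset.sum_comm
    _ = ∑ κ, ∑ i, ∑ j, ρ i j * (K κ * Matrix.single i j (1:ℂ) * (K κ)ᴴ * M).trace :=
        Finset.sum_comm
    _ = ∑ κ, (K κ * ρ * (K κ)ᴴ * M).trace :=
        Finset.sum_congr rfl fun κ _ => trace_kraus (K κ) ρ M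
    _ = (M * Φ ρ).trace := by
        rw [hΦ, Matrix.mul_sum, trace_sum]
        exact Finset.sum_congr rfl fun κ _ => (trace_mul_comm _ _)

lemma psd_diag_nonneg {n : Type*} [Fintype n] [DecidableEq n] {W : Matrix n n ℂ}
    (hW : W.PosSemidef) (z : n) : 0 ≤ W z z := by
  have h := hW.dotProduct_mulVec_nonneg (Pi.single z 1)
  simpa [← Pi.single_star, Matrix.mulVec_single, single_dotProduct] using h

lemma psd_trace_re_nonneg {n : Type*} [Fintype n] [DecidableEq n] {W : Matrix n n ℂ}
    (hW : W.PosSemidef) : 0 ≤ W.trace.re := by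
  rw [Matrix.trace, Complex.re_sum]
  exact Finset.sum_nonneg fun z _ => (Complex.le_def.mp (psd_diag_nonneg hW z)).1

lemma psd_entry_le_trace {n : Type*} [Fintype n] [DecidableEq n] {W : Matrix n n ℂ}
    (hW : W.PosSemidef) (x y : n) : ‖W x y‖ ≤ W.trace.re := by
  have hdiag : ∀ z, 0 ≤ (W z z).re := fun z => (Complex.le_def.mp (psd_diag_nonneg hW z)).1
  have htr : ∀ z : n, (W z z).re ≤ W.trace.re := by
    intro z
    rw [Matrix.trace, Complex.re_sum]
    exact Finset.single_le_sum (f := fun i => (W i i).re) (fun i _ => hdiag i)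
      (Finset.mem_univ z)
  by_cases hxy : x = y
  · subst hxy
    have him : (W x x).im = 0 := ((Complex.le_def.mp (psd_diag_nonneg hW x)).2).symm
    have hWr : W x x = ((W x x).re : ℂ) := Complex.ext (by simp) (by simp [him])
    rw [hWr, Complex.norm_real, Real.norm_eq_abs, abs_of_nonneg (hdiag x)]
    exact htr x
  · by_cases h0 : W x y = 0
    · rw [h0, norm_zero]; exact psd_trace_re_nonneg hW
    · set a := W x y with ha
      have hna : (‖a‖ : ℂ) ≠ 0 := by simpa using h0
      set c : ℂ := -(star a) / ‖a‖ with hc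
      have hyx : W y x = star a := by
        rw [ha, ← Matrix.conjTranspose_apply, hW.1.eq]
      have hkey : a * star a = (‖a‖ : ℂ) * ‖a‖ := by
        rw [show star a = (starRingEnd ℂ) a from rfl, Complex.mul_conj']
        ring
      have hsc : star c = -a / ‖a‖ := by
        rw [hc]
        simp [star_div₀, star_neg, star_star, Complex.star_def, Complex.conj_ofReal]
      have hac : a * c = -(‖a‖ : ℂ) := by
        calc a * c = -(a * star a) / ↑‖a‖ := by rw [hc]; ring
        _ = -((↑‖a‖ * ↑‖a‖) / ↑‖a‖) := by rw [hkey]; ring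
        _ = -(‖a‖:ℂ) := by rw [mul_div_assoc, div_self hna, mul_one]
      have hca : star c * star a = -(‖a‖ : ℂ) := by
        calc star c * star a = -(a * star a) / ↑‖a‖ := by rw [hsc]; ring
        _ = -((↑‖a‖ * ↑‖a‖) / ↑‖a‖) := by rw [hkey]; ring
        _ = -(‖a‖:ℂ) := by rw [mul_div_assoc, div_self hna, mul_one]
      have hcc : star c * c = 1 := by
        calc star c * c = (a * star a) / (↑‖a‖ * ↑‖a‖) := by rw [hsc, hc]; ring
        _ = 1 := by rw [hkey, div_self (mul_ne_zero hna hna)]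
      have h := hW.dotProduct_mulVec_nonneg (Pi.single x 1 + Pi.single y c)
      rw [star_add, Matrix.mulVec_add, dotProduct_add, add_dotProduct,
        add_dotProduct] at h
      simp only [← Pi.single_star, star_one, Matrix.mulVec_single, single_dotProduct,
        Pi.smul_apply, op_smul_eq_mul, Matrix.col_apply, mul_one, one_mul] at h
      rw [hyx, ← ha] at h
      rw [hca, hac, mul_comm (W y y) c, ← mul_assoc, hcc, one_mul] at h
      have hre := (Complex.le_def.mp h).1
      simp only [Complex.add_re, Complex.neg_re, Complex.ofReal_re, Complex.zero_re] at hre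
      have hpair : (W x x).re + (W y y).re ≤ W.trace.re := by
        rw [Matrix.trace, Complex.re_sum]
        have hsub := Finset.sum_le_sum_of_subset_of_nonneg
          (Finset.subset_univ ({x, y} : Finset n)) (fun i _ _ => hdiag i)
        rwa [Finset.sum_pair hxy] at hsub
      have hn : (0:ℝ) ≤ ‖a‖ := norm_nonneg a
      linarith

lemma trace_mul_entries {n : Type*} [Fintype n] (A B : Matrix n n ℂ) :
    (A * B).trace = ∑ p, ∑ q, A p q * B q p := by
  simp [Matrix.trace, Matrix.diag, Matrix.mul_apply]

end Aux

/-- the first level `SDP₁(Φ,k)` of the hierarchy upper bounds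
`P_succ(Φ,k)`. -/
theorem psucc_le_sdp_one {dA dB k : ℕ} {ι : Type} [Fintype ι]
    (hk : 1 ≤ k)
    (K : ι → Matrix (Fin dB) (Fin dA) ℂ)
    (hK : ∑ i, (K i)ᴴ * K i = 1)
    (Φ : Matrix (Fin dA) (Fin dA) ℂ → Matrix (Fin dB) (Fin dB) ℂ)
    (hΦ : ∀ x, Φ x = ∑ i, K i * x * (K i)ᴴ) :
    Psucc Φ k ≤ sSup {r : ℝ |
      ∃ W : Fin k → Fin k → Matrix (Fin dA × Fin dB) (Fin dA × Fin dB) ℂ,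
        (∀ i j, (W i j).PosSemidef) ∧
        (∑ i, ∑ j, (W i j).trace) = (k : ℂ) * (dB : ℂ) ∧
        (∀ i, ∑ j, W i j
          = (∑ j, ptraceSnd (W i j)) ⊗ₖ
              ((dB : ℂ)⁻¹ • (1 : Matrix (Fin dB) (Fin dB) ℂ))) ∧
        (∀ i j, ptraceFst (W i j) = (k : ℂ)⁻¹ • ∑ l, ptraceFst (W l j)) ∧
        r = ((dA : ℝ) / (k : ℝ)) * ∑ i, ((choi Φ * W i i).trace).re} := by
  classical
  have hkR : (k:ℝ) ≠ 0 := Nat.cast_ne_zero.mpr (by omega)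
  have hkC : (k:ℂ) ≠ 0 := Nat.cast_ne_zero.mpr (by omega)
  by_cases hdA : dA = 0
  · -- degenerate case `dA = 0`: both sides are `0`
    subst hdA
    have h1 : Psucc Φ k = 0 := by
      unfold Psucc
      convert Real.sSup_empty using 2
      rw [Set.eq_empty_iff_forall_notMem]
      rintro r ⟨M, ρ, hM, hMs, hρ, hr⟩
      have h2 := (hρ ⟨0, hk⟩).2
      simp [Matrix.trace] at h2
    rw [h1]
    apply Real.sSup_nonneg
    rintro r ⟨W, _, _, _, _, hr⟩
    rw [hr]
    norm_num
  · by_cases hdB : dB = 0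
    · -- degenerate case `dB = 0`, impossible since `dA ≠ 0`
      exfalso
      subst hdB
      have h2 := congrArg Matrix.trace hK
      rw [trace_sum, trace_one] at h2
      simp [Matrix.trace, Matrix.diag, Matrix.mul_apply] at h2
      exact hdA (by exact_mod_cast h2.symm)
    · -- main case
      have hdAR : (dA:ℝ) ≠ 0 := Nat.cast_ne_zero.mpr hdA
      have hdAC : (dA:ℂ) ≠ 0 := Nat.cast_ne_zero.mpr hdA
      have hdBC : (dB:ℂ) ≠ 0 := Nat.cast_ne_zero.mpr hdB
      unfold Psucc
      refine csSup_le_csSup ?_ ?_ ?_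
      · -- BddAbove
        refine ⟨(dA:ℝ) * ∑ p : Fin dA × Fin dB, ∑ q : Fin dA × Fin dB,
          (‖choi Φ p q‖ * ((k:ℝ)*(dB:ℝ))), ?_⟩
        rintro r ⟨W, hpsd, htr, hc2, hc3, hr⟩
        have hWtr : ∀ i, ((W i i).trace).re ≤ (k:ℝ)*(dB:ℝ) := by
          intro i
          have h2 := congrArg Complex.re htr
          rw [Complex.re_sum] at h2
          simp only [Complex.re_sum] at h2
          have h3 : (((k:ℂ)*(dB:ℂ)).re) = (k:ℝ)*(dB:ℝ) := by
            simp [Complex.mul_re]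
          rw [h3] at h2
          rw [← h2]
          calc ((W i i).trace).re ≤ ∑ j, ((W i j).trace).re :=
              Finset.single_le_sum (f := fun j => ((W i j).trace).re)
                (fun j _ => psd_trace_re_nonneg (hpsd i j)) (Finset.mem_univ i)
          _ ≤ ∑ l, ∑ j, ((W l j).trace).re :=
              Finset.single_le_sum (f := fun l => ∑ j, ((W l j).trace).re)
                (fun l _ => Finset.sum_nonneg fun j _ => psd_trace_re_nonneg (hpsd l j))
                (Finset.mem_univ i)
        have hrele : ∀ z : ℂ, z.re ≤ ‖z‖ := fun z => by
          exact Complex.re_le_norm z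
        have h4 : ∀ i, ((choi Φ * W i i).trace).re
            ≤ ∑ p : Fin dA × Fin dB, ∑ q : Fin dA × Fin dB,
              (‖choi Φ p q‖ * ((k:ℝ)*(dB:ℝ))) := by
          intro i
          rw [trace_mul_entries]
          calc (∑ p, ∑ q, choi Φ p q * W i i q p).re
              ≤ ‖∑ p : Fin dA × Fin dB, ∑ q : Fin dA × Fin dB, choi Φ p q * W i i q p‖ :=
                hrele _
            _ ≤ ∑ p : Fin dA × Fin dB, ‖∑ q : Fin dA × Fin dB, choi Φ p q * W i i q p‖ :=
                norm_sum_le _ _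
            _ ≤ ∑ p : Fin dA × Fin dB, ∑ q : Fin dA × Fin dB, ‖choi Φ p q * W i i q p‖ :=
                Finset.sum_le_sum fun p _ => norm_sum_le _ _
            _ ≤ ∑ p : Fin dA × Fin dB, ∑ q : Fin dA × Fin dB,
                (‖choi Φ p q‖ * ((k:ℝ)*(dB:ℝ))) := by
                refine Finset.sum_le_sum fun p _ => Finset.sum_le_sum fun q _ => ?_
                rw [norm_mul]
                refine mul_le_mul_of_nonneg_left ?_ (norm_nonneg _)
                exact le_trans (psd_entry_le_trace (hpsd i i) q p) (hWtr i)
        rw [hr]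
        set B := ∑ p : Fin dA × Fin dB, ∑ q : Fin dA × Fin dB,
          (‖choi Φ p q‖ * ((k:ℝ)*(dB:ℝ))) with hB
        calc (dA:ℝ)/(k:ℝ) * ∑ i, ((choi Φ * W i i).trace).re
            ≤ (dA:ℝ)/(k:ℝ) * ∑ i : Fin k, B := by
              refine mul_le_mul_of_nonneg_left (Finset.sum_le_sum fun i _ => h4 i) ?_
              positivity
          _ = (dA:ℝ) * B := by
              rw [Finset.sum_const, Finset.card_univ, Fintype.card_fin, nsmul_eq_mul]
              field_simp
      · -- the `Psucc` feasible set is nonempty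
        refine ⟨(1 / (k : ℝ)) * ∑ i : Fin k,
          ((((k:ℂ)⁻¹ • (1 : Matrix (Fin dB) (Fin dB) ℂ))
            * Φ ((dA:ℂ)⁻¹ • (1 : Matrix (Fin dA) (Fin dA) ℂ))).trace).re,
          fun _ => (k:ℂ)⁻¹ • 1, fun _ => (dA:ℂ)⁻¹ • 1, ?_, ?_, ?_, rfl⟩
        · intro i
          refine psd_smul' Matrix.PosSemidef.one ?_
          rw [show ((k:ℕ):ℂ)⁻¹ = (((k:ℝ)⁻¹ : ℝ) : ℂ) by
            rw [Complex.ofReal_inv, Complex.ofReal_natCast]]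
          exact Complex.zero_le_real.mpr (by positivity)
        · rw [Finset.sum_const, Finset.card_univ, Fintype.card_fin,
            ← Nat.cast_smul_eq_nsmul ℂ, smul_smul, mul_inv_cancel₀ hkC, one_smul]
        · intro i
          constructor
          · refine psd_smul' Matrix.PosSemidef.one ?_
            rw [show ((dA:ℕ):ℂ)⁻¹ = (((dA:ℝ)⁻¹ : ℝ) : ℂ) by
              rw [Complex.ofReal_inv, Complex.ofReal_natCast]]
            exact Complex.zero_le_real.mpr (by positivity)
          · rw [trace_smul, trace_one, smul_eq_mul]
            simp only [Fintype.card_fin]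
            exact inv_mul_cancel₀ hdAC
      · -- feasible points of `Psucc` give feasible points of the SDP
        rintro r ⟨M, ρ, hM, hMsum, hρ, hr⟩
        refine ⟨fun i j => (ρ i)ᵀ ⊗ₖ M j,
          fun i j => psd_kron ((hρ i).1.transpose) (hM j), ?_, ?_, ?_, ?_⟩
        · have h1 : ∀ (i j : Fin k), (((ρ i)ᵀ ⊗ₖ M j).trace) = (M j).trace := by
            intro i j
            rw [trace_kronecker, trace_transpose, (hρ i).2, one_mul]
          simp only [h1]
          have h2 : ∑ j, (M j).trace = (dB : ℂ) := by
            rw [← trace_sum, hMsum, trace_one, Fintype.card_fin]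
          rw [Finset.sum_congr rfl fun i _ => h2, Finset.sum_const, Finset.card_univ,
            Fintype.card_fin, nsmul_eq_mul]
        · intro i
          rw [kron_sum_right, hMsum]
          have h3 : ∀ j : Fin k, ptraceSnd ((ρ i)ᵀ ⊗ₖ M j) = (M j).trace • (ρ i)ᵀ :=
            fun j => ptraceSnd_kron _ _
          simp only [h3]
          rw [← Finset.sum_smul, ← trace_sum, hMsum, trace_one, Fintype.card_fin,
            smul_kronecker, kronecker_smul, smul_smul, mul_inv_cancel₀ hdBC, one_smul]
        · intro i j
          simp only [ptraceFst_kron, trace_transpose]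
          have h4 : ∀ l : Fin k, (ρ l).trace = 1 := fun l => (hρ l).2
          simp only [h4, one_smul]
          rw [Finset.sum_const, Finset.card_univ, Fintype.card_fin,
            ← Nat.cast_smul_eq_nsmul ℂ, smul_smul, inv_mul_cancel₀ hkC, one_smul]
        · rw [hr]
          have h5 : ∀ i : Fin k, ((choi Φ * ((ρ i)ᵀ ⊗ₖ M i)).trace)
              = (dA:ℂ)⁻¹ * (M i * Φ (ρ i)).trace := fun i => key_trace K Φ hΦ _ _
          simp only [h5]
          have h6 : ∀ z : ℂ, ((dA:ℂ)⁻¹ * z).re = (dA:ℝ)⁻¹ * z.re := by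
            intro z
            rw [show ((dA:ℕ):ℂ)⁻¹ = (((dA:ℝ)⁻¹ : ℝ) : ℂ) by
              rw [Complex.ofReal_inv, Complex.ofReal_natCast]]
            simp [Complex.mul_re]
          simp only [h6]
          rw [← Finset.mul_sum]
          field_simp
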